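/- There exists an absolute constant C > 0 with the following property: for every probability space (X, 𝓕, μ) with an ergodic measure-preserving transformation T : X → X, and all real-valued G₁, G₂ ∈ L^∞(μ) with ‖G₁‖_∞ ≤ 1 and ‖G₂‖_∞ ≤ 1, one has limsup_{N→∞} ∫ | (1/N) ∑_{n=1}^{N} G₁(T^{n}x) G₂(T^{2n}x) |² dμ(x) ≤ C ⦀G₁⦀₂². -/

import Mathlib

open MeasureTheory Filter

/-- The 4th power of the Host–Kra seminorm `⦀f⦀₂`:
`⦀f⦀₂⁴ = lim_{H→∞} (1/H) ∑_{h=1}^H |∫ f·(f∘T^h) dμ|²`. -/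
noncomputable def hkSeminorm2pow4 {X : Type*} [MeasurableSpace X] (μ : Measure X)
    (T : X → X) (f : X → ℝ) : ℝ :=
  limsup (fun H : ℕ => (1 / (H : ℝ)) * ∑ h ∈ Finset.Icc 1 H,
    |∫ x, f x * f (T^[h] x) ∂μ| ^ 2) atTop

open Finset Function Topology

section Auxiliary

/-! ### Elementary sum manipulation lemmas -/

lemma HKaux.sum_Icc_shift (c : ℕ → ℝ) (N k : ℕ) :
    ∑ n ∈ Finset.Icc 1 N, c (n + k) = ∑ m ∈ Finset.Ioc k (N + k), c m := by
  rw [show Finset.Icc 1 N = Finset.Ioc 0 N from Finset.Icc_add_one_left_eq_Ioc 0 N,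
    show Finset.Ioc k (N + k) = (Finset.Ioc 0 N).map (addRightEmbedding k) by
      rw [map_add_right_Ioc]; simp,
    Finset.sum_map]
  simp [addRightEmbedding]

lemma HKaux.range_succ_eq_insert_Ioc (M : ℕ) :
    Finset.range (M + 1) = insert 0 (Finset.Ioc 0 M) := by
  ext x; simp only [Finset.mem_range, Finset.mem_insert, Finset.mem_Ioc]; omega

/-- shifting a Cesàro average does not change its limit. -/
lemma HKaux.cesaro_shift (c : ℕ → ℝ) (L : ℝ)
    (h : Tendsto (fun N : ℕ => (1/(N:ℝ)) * ∑ i ∈ Finset.range N, c i) atTop (𝓝 L)) (k : ℕ) :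
    Tendsto (fun N : ℕ => (1/(N:ℝ)) * ∑ n ∈ Finset.Icc 1 N, c (n + k)) atTop (𝓝 L) := by
  have key : ∀ N : ℕ, ∑ n ∈ Finset.Icc 1 N, c (n + k)
      = ∑ i ∈ Finset.range (N + k + 1), c i - ∑ i ∈ Finset.range (k + 1), c i := by
    intro N
    have e2 : ∑ i ∈ Finset.Ioc 0 k, c i + ∑ i ∈ Finset.Ioc k (N + k), c i
        = ∑ i ∈ Finset.Ioc 0 (N + k), c i :=
      Finset.sum_Ioc_consecutive _ (Nat.zero_le k) (Nat.le_add_left k N)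
    have e3 : ∀ M : ℕ, ∑ i ∈ Finset.range (M + 1), c i = c 0 + ∑ i ∈ Finset.Ioc 0 M, c i := by
      intro M
      rw [HKaux.range_succ_eq_insert_Ioc, Finset.sum_insert (by simp)]
    rw [HKaux.sum_Icc_shift, e3, e3, ← e2]
    ring
  have h1 : Tendsto (fun N : ℕ => ((N + k + 1 : ℕ) : ℝ)/(N:ℝ) *
      ((1/((N + k + 1 : ℕ):ℝ)) * ∑ i ∈ Finset.range (N + k + 1), c i)) atTop (𝓝 (1 * L)) := by
    refine Tendsto.mul ?_ (h.comp (tendsto_add_atTop_nat (k+1)))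
    have he : (fun N : ℕ => ((N + k + 1 : ℕ) : ℝ)/(N:ℝ))
        =ᶠ[atTop] fun N : ℕ => 1 + ((k:ℝ)+1)/(N:ℝ) := by
      filter_upwards [eventually_gt_atTop 0] with N hN
      have hN' : (N:ℝ) ≠ 0 := by positivity
      push_cast
      field_simp
      ring
    rw [show (1:ℝ) = 1 + 0 by ring]
    exact Tendsto.congr' he.symm
      (tendsto_const_nhds.add
        (Tendsto.div_atTop tendsto_const_nhds tendsto_natCast_atTop_atTop))
  have h2 : Tendsto (fun N : ℕ => (1/(N:ℝ)) * ∑ i ∈ Finset.range (k + 1), c i) atTop (𝓝 0) := by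
    have := Tendsto.div_atTop (tendsto_const_nhds (x := ∑ i ∈ Finset.range (k + 1), c i))
      (tendsto_natCast_atTop_atTop (R := ℝ))
    refine this.congr fun N => ?_
    ring
  have h3 := h1.sub h2
  rw [one_mul, sub_zero] at h3
  refine h3.congr' ?_
  filter_upwards [eventually_gt_atTop 0] with N hN
  have hN' : (N:ℝ) ≠ 0 := by positivity
  have hM : ((N + k + 1 : ℕ):ℝ) ≠ 0 := by positivity
  rw [key N]
  push_cast at *
  field_simp

/-- difference between a shifted sum and the original sum is at most `2h`. -/
lemma HKaux.sum_shift_diff (f : ℕ → ℝ) (hb : ∀ n, |f n| ≤ 1) (N h : ℕ) :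
    |∑ n ∈ Finset.Icc 1 N, f (n + h) - ∑ n ∈ Finset.Icc 1 N, f n| ≤ 2 * h := by
  have e1 := HKaux.sum_Icc_shift f N h
  have e2 : ∑ i ∈ Finset.Ioc 0 h, f i + ∑ i ∈ Finset.Ioc h (N + h), f i
      = ∑ i ∈ Finset.Ioc 0 (N + h), f i :=
    Finset.sum_Ioc_consecutive _ (Nat.zero_le h) (Nat.le_add_left h N)
  have e3 : ∑ i ∈ Finset.Ioc 0 N, f i + ∑ i ∈ Finset.Ioc N (N + h), f i
      = ∑ i ∈ Finset.Ioc 0 (N + h), f i :=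
    Finset.sum_Ioc_consecutive _ (Nat.zero_le N) (Nat.le_add_right N h)
  have key : ∑ n ∈ Finset.Icc 1 N, f (n + h) - ∑ n ∈ Finset.Icc 1 N, f n
      = ∑ i ∈ Finset.Ioc N (N + h), f i - ∑ i ∈ Finset.Ioc 0 h, f i := by
    rw [e1, show Finset.Icc 1 N = Finset.Ioc 0 N from Finset.Icc_add_one_left_eq_Ioc 0 N]
    have := e2.trans e3.symm
    linarith
  rw [key]
  have b1 : ∀ (a b : ℕ), |∑ i ∈ Finset.Ioc a (a + b), f i| ≤ b := by
    intro a b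
    calc |∑ i ∈ Finset.Ioc a (a + b), f i| ≤ ∑ i ∈ Finset.Ioc a (a + b), |f i| :=
          Finset.abs_sum_le_sum_abs _ _
      _ ≤ ∑ _i ∈ Finset.Ioc a (a + b), 1 := Finset.sum_le_sum fun i _ => hb i
      _ = ((Finset.Ioc a (a + b)).card : ℝ) := by simp
      _ = b := by rw [Nat.card_Ioc]; simp
  calc |∑ i ∈ Finset.Ioc N (N + h), f i - ∑ i ∈ Finset.Ioc 0 h, f i|
      ≤ |∑ i ∈ Finset.Ioc N (N + h), f i| + |∑ i ∈ Finset.Ioc 0 h, f i| := abs_sub _ _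
    _ ≤ h + h := add_le_add (b1 N h) (by simpa using b1 0 h)
    _ = 2 * h := by ring

lemma HKaux.avg_abs_le (M : ℕ) (w : ℕ → ℝ) (hw : ∀ i, |w i| ≤ 1) :
    |(1/(M:ℝ)) * ∑ i ∈ Finset.Icc 1 M, w i| ≤ 1 := by
  rcases Nat.eq_zero_or_pos M with hM | hM
  · simp [hM]
  · have hM' : (0:ℝ) < M := by exact_mod_cast hM
    rw [abs_mul, abs_of_nonneg (by positivity : (0:ℝ) ≤ 1/(M:ℝ))]
    have : |∑ i ∈ Finset.Icc 1 M, w i| ≤ M := by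
      calc |∑ i ∈ Finset.Icc 1 M, w i| ≤ ∑ i ∈ Finset.Icc 1 M, |w i| :=
            Finset.abs_sum_le_sum_abs _ _
        _ ≤ ∑ _i ∈ Finset.Icc 1 M, 1 := Finset.sum_le_sum fun i _ => hw i
        _ = M := by simp
    calc (1/(M:ℝ)) * |∑ i ∈ Finset.Icc 1 M, w i| ≤ (1/(M:ℝ)) * M :=
          mul_le_mul_of_nonneg_left this (by positivity)
      _ = 1 := by field_simp

lemma HKaux.avg_swap {α β : Type*} (a b : ℝ) (s : Finset α) (t : Finset β) (q : α → β → ℝ) :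
    a * ∑ n ∈ s, (b * ∑ p ∈ t, q n p) = b * ∑ p ∈ t, (a * ∑ n ∈ s, q n p) := by
  simp only [← Finset.mul_sum]
  rw [Finset.sum_comm]
  ring

/-- counting bound: double sum of `c (|h-h'|)` over `Icc 1 H × Icc 1 H`. -/
lemma HKaux.count_bound (c : ℕ → ℝ) (hc0 : ∀ k, 0 ≤ c k) (hc1 : ∀ k, c k ≤ 1) (H : ℕ) :
    ∑ p ∈ Finset.Icc 1 H ×ˢ Finset.Icc 1 H, c ((p.1 - p.2) + (p.2 - p.1))
      ≤ (H:ℝ) * (1 + 2 * ∑ k ∈ Finset.Icc 1 H, c k) := by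
  rw [Finset.sum_product]
  have hrow : ∀ h ∈ Finset.Icc 1 H,
      ∑ h' ∈ Finset.Icc 1 H, c ((h - h') + (h' - h)) ≤ 1 + 2 * ∑ k ∈ Finset.Icc 1 H, c k := by
    intro h hh
    rw [← Finset.sum_erase_add _ _ hh]
    have hdiag : c ((h - h) + (h - h)) ≤ 1 := by simpa using hc1 0
    have hsplit : (Finset.Icc 1 H).erase h
        = ((Finset.Icc 1 H).filter (· < h)) ∪ ((Finset.Icc 1 H).filter (h < ·)) := by
      ext x
      simp only [Finset.mem_erase, Finset.mem_Icc, Finset.mem_union, Finset.mem_filter]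
      omega
    have hdisj : Disjoint ((Finset.Icc 1 H).filter (· < h)) ((Finset.Icc 1 H).filter (h < ·)) := by
      rw [Finset.disjoint_left]
      intro a ha hb
      simp only [Finset.mem_filter] at ha hb
      omega
    rw [hsplit, Finset.sum_union hdisj]
    have hmemh := Finset.mem_Icc.mp hh
    have hS₁ : ∑ h' ∈ (Finset.Icc 1 H).filter (· < h), c ((h - h') + (h' - h))
        ≤ ∑ k ∈ Finset.Icc 1 H, c k := by
      rw [show ∑ h' ∈ (Finset.Icc 1 H).filter (· < h), c ((h - h') + (h' - h))
          = ∑ h' ∈ (Finset.Icc 1 H).filter (· < h), c (h - h') from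
        Finset.sum_congr rfl fun h' hm => by
          have := (Finset.mem_filter.mp hm).2
          congr 1
          omega]
      have himg : ∑ k ∈ ((Finset.Icc 1 H).filter (· < h)).image (fun h' => h - h'), c k
          = ∑ h' ∈ (Finset.Icc 1 H).filter (· < h), c (h - h') := by
        refine Finset.sum_image ?_
        intro a ha b hb hab
        simp only [Finset.coe_filter, Set.mem_setOf_eq, Finset.mem_filter, Finset.mem_Icc] at ha hb hab
        omega
      rw [← himg]
      refine Finset.sum_le_sum_of_subset_of_nonneg ?_ (fun k _ _ => hc0 k)
      intro k hk
      simp only [Finset.mem_image, Finset.mem_filter, Finset.mem_Icc] at hk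
      obtain ⟨a, ⟨⟨ha1, ha2⟩, ha3⟩, rfl⟩ := hk
      simp only [Finset.mem_Icc]
      omega
    have hS₂ : ∑ h' ∈ (Finset.Icc 1 H).filter (h < ·), c ((h - h') + (h' - h))
        ≤ ∑ k ∈ Finset.Icc 1 H, c k := by
      rw [show ∑ h' ∈ (Finset.Icc 1 H).filter (h < ·), c ((h - h') + (h' - h))
          = ∑ h' ∈ (Finset.Icc 1 H).filter (h < ·), c (h' - h) from
        Finset.sum_congr rfl fun h' hm => by
          have := (Finset.mem_filter.mp hm).2
          congr 1
          omega]
      have himg : ∑ k ∈ ((Finset.Icc 1 H).filter (h < ·)).image (fun h' => h' - h), c k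
          = ∑ h' ∈ (Finset.Icc 1 H).filter (h < ·), c (h' - h) := by
        refine Finset.sum_image ?_
        intro a ha b hb hab
        simp only [Finset.coe_filter, Set.mem_setOf_eq, Finset.mem_filter, Finset.mem_Icc] at ha hb hab
        omega
      rw [← himg]
      refine Finset.sum_le_sum_of_subset_of_nonneg ?_ (fun k _ _ => hc0 k)
      intro k hk
      simp only [Finset.mem_image, Finset.mem_filter, Finset.mem_Icc] at hk
      obtain ⟨a, ⟨⟨ha1, ha2⟩, ha3⟩, rfl⟩ := hk
      simp only [Finset.mem_Icc]
      omega
    linarith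
  calc ∑ h ∈ Finset.Icc 1 H, ∑ h' ∈ Finset.Icc 1 H, c ((h - h') + (h' - h))
      ≤ ∑ _h ∈ Finset.Icc 1 H, (1 + 2 * ∑ k ∈ Finset.Icc 1 H, c k) :=
        Finset.sum_le_sum hrow
    _ = (H:ℝ) * (1 + 2 * ∑ k ∈ Finset.Icc 1 H, c k) := by
        rw [Finset.sum_const, Nat.card_Icc, Nat.add_sub_cancel, nsmul_eq_mul]

end Auxiliary

section Ergodic

variable {X : Type} [MeasurableSpace X] {μ : Measure X} [IsProbabilityMeasure μ] {T : X → X}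

lemma HKaux.integrable_of_abs_le {f : X → ℝ} (hm : Measurable f) (C : ℝ) (hb : ∀ x, |f x| ≤ C) :
    Integrable f μ :=
  memLp_one_iff_integrable.mp (MemLp.of_bound hm.aestronglyMeasurable C
    (ae_of_all _ fun x => by simpa using hb x))

lemma HKaux.abs_integral_le_one {f : X → ℝ} (hm : Measurable f) (hb : ∀ x, |f x| ≤ 1) :
    |∫ x, f x ∂μ| ≤ 1 := by
  calc |∫ x, f x ∂μ| ≤ ∫ x, |f x| ∂μ := by
        simpa [Real.norm_eq_abs] using norm_integral_le_integral_norm (μ := μ) f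
    _ ≤ ∫ _x, (1:ℝ) ∂μ := integral_mono (HKaux.integrable_of_abs_le hm 1 hb).abs
        (integrable_const 1) (fun x => by simpa using hb x)
    _ = 1 := by simp

/-- Von Neumann mean ergodic theorem for correlations. -/
lemma HKaux.met_corr (hT : Ergodic T μ) {F g : X → ℝ}
    (hF : Measurable F) (hg : Measurable g) (hFb : ∀ x, |F x| ≤ 1) (hgb : ∀ x, |g x| ≤ 1) :
    Tendsto (fun N : ℕ => (1 / (N:ℝ)) * ∑ i ∈ Finset.range N, ∫ x, F x * g (T^[i] x) ∂μ)
      atTop (𝓝 ((∫ x, F x ∂μ) * ∫ x, g x ∂μ)) := by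
  have hTm : MeasurePreserving T μ μ := hT.toMeasurePreserving
  set U : Lp ℝ 2 μ →L[ℝ] Lp ℝ 2 μ :=
    (Lp.compMeasurePreservingₗᵢ ℝ T hTm).toContinuousLinearMap with hU
  have hU1 : ‖U‖ ≤ 1 := LinearIsometry.norm_toContinuousLinearMap_le _
  have hFm2 : MemLp F 2 μ := MemLp.of_bound hF.aestronglyMeasurable 1
    (ae_of_all _ fun x => by simpa using hFb x)
  have hgm2 : MemLp g 2 μ := MemLp.of_bound hg.aestronglyMeasurable 1
    (ae_of_all _ fun x => by simpa using hgb x)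
  set FL := hFm2.toLp F with hFL
  set gL := hgm2.toLp g with hgL
  have hgi : ∀ i : ℕ, MemLp (g ∘ T^[i]) 2 μ := fun i =>
    hgm2.comp_measurePreserving (hTm.iterate i)
  have hUiter : ∀ i : ℕ, (⇑U)^[i] gL = (hgi i).toLp (g ∘ T^[i]) := by
    intro i
    induction i with
    | zero => rfl
    | succ i ih =>
      rw [Function.iterate_succ_apply', ih]
      have : U ((hgi i).toLp (g ∘ T^[i])) =
          ((hgi i).comp_measurePreserving hTm).toLp ((g ∘ T^[i]) ∘ T) :=
        Lp.toLp_compMeasurePreserving (hgi i) hTm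
      rw [this]
      rfl
  have hinner : ∀ i : ℕ, (inner ℝ FL ((⇑U)^[i] gL) : ℝ) = ∫ x, F x * g (T^[i] x) ∂μ := by
    intro i
    rw [hUiter i, L2.inner_def]
    refine integral_congr_ae ?_
    filter_upwards [hFm2.coeFn_toLp, (hgi i).coeFn_toLp] with x h1 h2
    simp [h1, h2, RCLike.inner_apply, hFL, mul_comm]
  set K : Submodule ℝ (Lp ℝ 2 μ) := LinearMap.eqLocus (U : Lp ℝ 2 μ →ₗ[ℝ] Lp ℝ 2 μ)
    ((1 : Lp ℝ 2 μ →L[ℝ] Lp ℝ 2 μ) : Lp ℝ 2 μ →ₗ[ℝ] Lp ℝ 2 μ) with hK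
  set y : Lp ℝ 2 μ := (K.orthogonalProjectionOnto gL : Lp ℝ 2 μ) with hy
  have hMET := U.tendsto_birkhoffAverage_orthogonalProjection hU1 gL
  have hyK : y ∈ K := (K.orthogonalProjectionOnto gL).2
  have hyfix : U y = y := by simpa [hK, LinearMap.mem_eqLocus] using hyK
  obtain ⟨c, hc⟩ : ∃ c : ℝ, (⇑y : X → ℝ) =ᵐ[μ] Function.const X c := by
    refine hT.ae_eq_const_of_ae_eq_comp₀ (Lp.aestronglyMeasurable y).aemeasurable.nullMeasurable ?_
    have h1 : ⇑(Lp.compMeasurePreserving T hTm y) =ᵐ[μ] (⇑y) ∘ T :=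
      Lp.coeFn_compMeasurePreserving y hTm
    have h2 : Lp.compMeasurePreserving T hTm y = y := hyfix
    rw [h2] at h1; exact h1.symm
  have h1m : MemLp (fun _ : X => (1:ℝ)) 2 μ := memLp_const 1
  set oneL : Lp ℝ 2 μ := h1m.toLp _ with honeL
  have honefix : oneL ∈ K := by
    rw [hK, LinearMap.mem_eqLocus]
    have : U (h1m.toLp _) = (h1m.comp_measurePreserving hTm).toLp ((fun _ : X => (1:ℝ)) ∘ T) :=
      Lp.toLp_compMeasurePreserving h1m hTm
    simpa [honeL, Function.comp_def] using this
  have hproj : (inner ℝ (gL - y) oneL : ℝ) = 0 := by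
    have := Submodule.starProjection_inner_eq_zero (K := K) gL oneL honefix
    rw [real_inner_comm] at this ⊢
    exact this
  have hint_one : ∀ (v : Lp ℝ 2 μ), (inner ℝ v oneL : ℝ) = ∫ x, v x ∂μ := by
    intro v
    rw [L2.inner_def]
    refine integral_congr_ae ?_
    filter_upwards [h1m.coeFn_toLp] with x h1
    simp [honeL, h1, RCLike.inner_apply]
  have hcy : ∫ x, y x ∂μ = c := by
    rw [integral_congr_ae hc]
    simp
  have hgLint : ∫ x, gL x ∂μ = ∫ x, g x ∂μ := integral_congr_ae hgm2.coeFn_toLp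
  have hcval : c = ∫ x, g x ∂μ := by
    have h0 : (inner ℝ gL oneL : ℝ) = (inner ℝ y oneL : ℝ) := by
      have := hproj
      rw [inner_sub_left, sub_eq_zero] at this
      exact this
    rw [hint_one, hint_one, hgLint, hcy] at h0
    exact h0.symm
  have hlim : (inner ℝ FL y : ℝ) = (∫ x, F x ∂μ) * ∫ x, g x ∂μ := by
    rw [L2.inner_def]
    have : ∫ a, (inner ℝ (FL a) (y a) : ℝ) ∂μ = ∫ a, F a * c ∂μ := by
      refine integral_congr_ae ?_
      filter_upwards [hFm2.coeFn_toLp, hc] with x h1 h2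
      simp [h1, h2, RCLike.inner_apply, Function.const, hFL, mul_comm]
    rw [this, integral_mul_const, hcval]
  have hten : Tendsto (fun N : ℕ => (inner ℝ FL (birkhoffAverage ℝ (⇑U) _root_.id N gL) : ℝ))
      atTop (𝓝 (inner ℝ FL y : ℝ)) := tendsto_const_nhds.inner hMET
  rw [hlim] at hten
  refine hten.congr fun N => ?_
  rw [birkhoffAverage, birkhoffSum, inner_smul_right, inner_sum]
  simp only [_root_.id]
  rw [Finset.mul_sum, Finset.mul_sum]
  refine Finset.sum_congr rfl fun i _ => ?_
  rw [hinner i]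
  norm_num

lemma HKaux.integral_comp_iterate (hT : Ergodic T μ) (m : ℕ) {φ : X → ℝ} (hφ : Measurable φ) :
    ∫ x, φ (T^[m] x) ∂μ = ∫ y, φ y ∂μ := by
  have hTm := hT.toMeasurePreserving.iterate m
  calc ∫ x, φ (T^[m] x) ∂μ
      = ∫ y, φ y ∂(μ.map (T^[m])) := (integral_map hTm.measurable.aemeasurable
        (by rw [hTm.map_eq]; exact hφ.aestronglyMeasurable)).symm
    _ = ∫ y, φ y ∂μ := by rw [hTm.map_eq]

lemma HKaux.pair_limit_le (hT : Ergodic T μ) {G₁ G₂ : X → ℝ}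
    (hG₁ : Measurable G₁) (hG₂ : Measurable G₂)
    (hb₁ : ∀ x, |G₁ x| ≤ 1) (hb₂ : ∀ x, |G₂ x| ≤ 1)
    (h h' : ℕ) (hle : h ≤ h') :
    Tendsto (fun N : ℕ => (1/(N:ℝ)) * ∑ n ∈ Finset.Icc 1 N,
        ∫ x, (G₁ (T^[n+h] x) * G₂ (T^[2*(n+h)] x)) * (G₁ (T^[n+h'] x) * G₂ (T^[2*(n+h')] x)) ∂μ)
      atTop
      (𝓝 ((∫ y, G₁ y * G₁ (T^[(h-h')+(h'-h)] y) ∂μ) *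
          ∫ y, G₂ y * G₂ (T^[2*((h-h')+(h'-h))] y) ∂μ)) := by
  set k := (h - h') + (h' - h) with hk
  set F : X → ℝ := fun y => G₁ y * G₁ (T^[k] y) with hF
  set g : X → ℝ := fun y => G₂ y * G₂ (T^[2*k] y) with hg
  have hFm : Measurable F := hG₁.mul (hG₁.comp (hT.measurable.iterate k))
  have hgm : Measurable g := hG₂.mul (hG₂.comp (hT.measurable.iterate (2*k)))
  have hFb : ∀ x, |F x| ≤ 1 := fun x => by
    rw [hF]; simp only [abs_mul]
    exact mul_le_one₀ (hb₁ x) (abs_nonneg _) (hb₁ _)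
  have hgb : ∀ x, |g x| ≤ 1 := fun x => by
    rw [hg]; simp only [abs_mul]
    exact mul_le_one₀ (hb₂ x) (abs_nonneg _) (hb₂ _)
  have hmet := HKaux.met_corr hT hFm hgm hFb hgb
  have hshift := HKaux.cesaro_shift (fun m => ∫ x, F x * g (T^[m] x) ∂μ) _ hmet h
  refine hshift.congr fun N => ?_
  congr 1
  refine Finset.sum_congr rfl fun n hn => ?_
  have hptwise : ∀ x, F (T^[n+h] x) * g (T^[n+h] (T^[n+h] x))
      = (G₁ (T^[n+h] x) * G₂ (T^[2*(n+h)] x)) * (G₁ (T^[n+h'] x) * G₂ (T^[2*(n+h')] x)) := by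
    intro x
    simp only [hF, hg, ← Function.iterate_add_apply]
    rw [show k + (n+h) = n + h' by omega,
      show 2*k + ((n+h) + (n+h)) = 2*(n+h') by omega,
      show (n+h) + (n+h) = 2*(n+h) by omega]
    ring
  have hψ : Measurable fun y => F y * g (T^[n+h] y) :=
    hFm.mul (hgm.comp (hT.measurable.iterate (n+h)))
  calc ∫ x, F x * g (T^[n+h] x) ∂μ
      = ∫ x, (fun y => F y * g (T^[n+h] y)) (T^[n+h] x) ∂μ :=
        (HKaux.integral_comp_iterate hT (n+h) hψ).symm
    _ = ∫ x, (G₁ (T^[n+h] x) * G₂ (T^[2*(n+h)] x)) * (G₁ (T^[n+h'] x) * G₂ (T^[2*(n+h')] x)) ∂μ := by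
        refine integral_congr_ae (ae_of_all _ fun x => ?_)
        simp only
        rw [← hptwise x]

lemma HKaux.pair_limit (hT : Ergodic T μ) {G₁ G₂ : X → ℝ}
    (hG₁ : Measurable G₁) (hG₂ : Measurable G₂)
    (hb₁ : ∀ x, |G₁ x| ≤ 1) (hb₂ : ∀ x, |G₂ x| ≤ 1) (h h' : ℕ) :
    Tendsto (fun N : ℕ => (1/(N:ℝ)) * ∑ n ∈ Finset.Icc 1 N,
        ∫ x, (G₁ (T^[n+h] x) * G₂ (T^[2*(n+h)] x)) * (G₁ (T^[n+h'] x) * G₂ (T^[2*(n+h')] x)) ∂μ)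
      atTop
      (𝓝 ((∫ y, G₁ y * G₁ (T^[(h-h')+(h'-h)] y) ∂μ) *
          ∫ y, G₂ y * G₂ (T^[2*((h-h')+(h'-h))] y) ∂μ)) := by
  rcases le_total h h' with hle | hle
  · exact HKaux.pair_limit_le hT hG₁ hG₂ hb₁ hb₂ h h' hle
  · have := HKaux.pair_limit_le hT hG₁ hG₂ hb₁ hb₂ h' h hle
    rw [show (h' - h) + (h - h') = (h - h') + (h' - h) by omega] at this
    refine this.congr fun N => ?_
    congr 1
    refine Finset.sum_congr rfl fun n _ => ?_
    refine integral_congr_ae (ae_of_all _ fun x => ?_)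
    ring

set_option maxHeartbeats 1000000 in
lemma HKaux.vdc_bound (hT : Ergodic T μ) {G₁ G₂ : X → ℝ}
    (hG₁ : Measurable G₁) (hG₂ : Measurable G₂)
    (hb₁ : ∀ x, |G₁ x| ≤ 1) (hb₂ : ∀ x, |G₂ x| ≤ 1)
    (H N : ℕ) (hH : 1 ≤ H) (hN : 1 ≤ N) :
    ∫ x, |(1/(N:ℝ)) * ∑ n ∈ Finset.Icc 1 N, G₁ (T^[n] x) * G₂ (T^[2*n] x)|^2 ∂μ
      ≤ (1/(H:ℝ)^2) * ∑ p ∈ Finset.Icc 1 H ×ˢ Finset.Icc 1 H,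
          ((1/(N:ℝ)) * ∑ n ∈ Finset.Icc 1 N, ∫ x,
            (G₁ (T^[n+p.1] x) * G₂ (T^[2*(n+p.1)] x)) *
              (G₁ (T^[n+p.2] x) * G₂ (T^[2*(n+p.2)] x)) ∂μ)
        + (4*(H:ℝ)/(N:ℝ) + 4*(H:ℝ)^2/(N:ℝ)^2) := by
  have hN' : (0:ℝ) < N := by exact_mod_cast hN
  have hH' : (0:ℝ) < H := by exact_mod_cast hH
  set u : ℕ → X → ℝ := fun n x => G₁ (T^[n] x) * G₂ (T^[2*n] x) with hu
  have hum : ∀ n, Measurable (u n) := fun n =>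
    (hG₁.comp (hT.measurable.iterate n)).mul (hG₂.comp (hT.measurable.iterate (2*n)))
  have hub : ∀ n x, |u n x| ≤ 1 := fun n x => by
    rw [hu]; simp only [abs_mul]
    exact mul_le_one₀ (hb₁ _) (abs_nonneg _) (hb₂ _)
  set A : X → ℝ := fun x => (1/(N:ℝ)) * ∑ n ∈ Finset.Icc 1 N, u n x with hA
  set v : ℕ → X → ℝ := fun n x => (1/(H:ℝ)) * ∑ h ∈ Finset.Icc 1 H, u (n+h) x with hv
  set B : X → ℝ := fun x => (1/(N:ℝ)) * ∑ n ∈ Finset.Icc 1 N, v n x with hB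
  have hvm : ∀ n, Measurable (v n) := fun n =>
    (Finset.measurable_sum _ fun h _ => hum (n+h)).const_mul _
  have hBm : Measurable B := (Finset.measurable_sum _ fun n _ => hvm n).const_mul _
  have hAm : Measurable A := (Finset.measurable_sum _ fun n _ => hum n).const_mul _
  have hvb : ∀ n x, |v n x| ≤ 1 := fun n x => HKaux.avg_abs_le H _ (fun h => hub (n+h) x)
  have hBb : ∀ x, |B x| ≤ 1 := fun x => HKaux.avg_abs_le N _ (fun n => hvb n x)
  have hAb : ∀ x, |A x| ≤ 1 := fun x => HKaux.avg_abs_le N _ (fun n => hub n x)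
  have hAB : ∀ x, |A x - B x| ≤ 2*(H:ℝ)/(N:ℝ) := by
    intro x
    have hswap : B x = (1/(H:ℝ)) * ∑ h ∈ Finset.Icc 1 H,
        ((1/(N:ℝ)) * ∑ n ∈ Finset.Icc 1 N, u (n+h) x) := by
      rw [hB]
      simp only [hv]
      exact HKaux.avg_swap _ _ _ _ _
    have hAeq : A x = (1/(H:ℝ)) * ∑ h ∈ Finset.Icc 1 H, A x := by
      rw [Finset.sum_const, Nat.card_Icc]
      simp only [nsmul_eq_mul]
      have : ((H + 1 - 1 : ℕ) : ℝ) = (H:ℝ) := by push_cast; ring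
      rw [this]
      field_simp
    calc |A x - B x|
        = |(1/(H:ℝ)) * ∑ h ∈ Finset.Icc 1 H,
            (A x - (1/(N:ℝ)) * ∑ n ∈ Finset.Icc 1 N, u (n+h) x)| := by
          rw [Finset.sum_sub_distrib, mul_sub, ← hAeq, ← hswap]
      _ ≤ (1/(H:ℝ)) * ∑ h ∈ Finset.Icc 1 H, |A x - (1/(N:ℝ)) * ∑ n ∈ Finset.Icc 1 N, u (n+h) x| := by
          rw [abs_mul, abs_of_nonneg (by positivity : (0:ℝ) ≤ 1/(H:ℝ))]
          exact mul_le_mul_of_nonneg_left (Finset.abs_sum_le_sum_abs _ _) (by positivity)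
      _ ≤ (1/(H:ℝ)) * ∑ h ∈ Finset.Icc 1 H, (2*(H:ℝ)/(N:ℝ)) := by
          refine mul_le_mul_of_nonneg_left (Finset.sum_le_sum fun h hhm => ?_) (by positivity)
          have hd := HKaux.sum_shift_diff (fun m => u m x) (fun m => hub m x) N h
          have : A x - (1/(N:ℝ)) * ∑ n ∈ Finset.Icc 1 N, u (n+h) x
              = (1/(N:ℝ)) * (∑ n ∈ Finset.Icc 1 N, u n x - ∑ n ∈ Finset.Icc 1 N, u (n+h) x) := by
            rw [hA]; ring
          rw [this, abs_mul, abs_of_nonneg (by positivity : (0:ℝ) ≤ 1/(N:ℝ)), abs_sub_comm]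
          have hhH : (h:ℝ) ≤ H := by
            exact_mod_cast (Finset.mem_Icc.mp hhm).2
          calc (1/(N:ℝ)) * |∑ n ∈ Finset.Icc 1 N, u (n+h) x - ∑ n ∈ Finset.Icc 1 N, u n x|
              ≤ (1/(N:ℝ)) * (2*h) := mul_le_mul_of_nonneg_left hd (by positivity)
            _ ≤ 2*(H:ℝ)/(N:ℝ) := by
                rw [div_eq_mul_inv]
                calc (1/(N:ℝ)) * (2*h) ≤ (1/(N:ℝ)) * (2*H) :=
                      mul_le_mul_of_nonneg_left (by linarith) (by positivity)
                  _ = 2*(H:ℝ)*(N:ℝ)⁻¹ := by ring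
      _ = 2*(H:ℝ)/(N:ℝ) := by
          rw [Finset.sum_const, Nat.card_Icc]
          simp only [nsmul_eq_mul]
          have : ((H + 1 - 1 : ℕ) : ℝ) = (H:ℝ) := by push_cast; ring
          rw [this]
          field_simp
  have hptsq : ∀ x, |A x|^2 ≤ B x^2 + (4*(H:ℝ)/(N:ℝ) + 4*(H:ℝ)^2/(N:ℝ)^2) := by
    intro x
    rw [sq_abs]
    have h1 : A x ^ 2 = B x ^2 + (2 * B x * (A x - B x) + (A x - B x)^2) := by ring
    rw [h1]
    have h2 : 2 * B x * (A x - B x) ≤ 2 * |B x| * |A x - B x| := by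
      calc 2 * B x * (A x - B x) ≤ |2 * B x * (A x - B x)| := le_abs_self _
        _ = 2 * |B x| * |A x - B x| := by rw [abs_mul, abs_mul]; simp [abs_of_nonneg]
    have h3 : 2 * |B x| * |A x - B x| ≤ 2 * 1 * (2*(H:ℝ)/(N:ℝ)) := by
      have := hAB x
      have := hBb x
      have h0 : (0:ℝ) ≤ |A x - B x| := abs_nonneg _
      nlinarith [abs_nonneg (B x)]
    have h4 : (A x - B x)^2 ≤ (2*(H:ℝ)/(N:ℝ))^2 := by
      have := hAB x
      nlinarith [abs_nonneg (A x - B x), sq_abs (A x - B x)]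
    have h5 : (2*(H:ℝ)/(N:ℝ))^2 = 4*(H:ℝ)^2/(N:ℝ)^2 := by ring
    have h6 : 2 * 1 * (2*(H:ℝ)/(N:ℝ)) = 4*(H:ℝ)/(N:ℝ) := by ring
    linarith
  have hintA2 : Integrable (fun x => |A x|^2) μ :=
    HKaux.integrable_of_abs_le ((hAm.abs).pow measurable_const) 1
      (fun x => by
        rw [abs_of_nonneg (by positivity)]
        calc |A x|^2 ≤ 1^2 := pow_le_pow_left₀ (abs_nonneg _) (hAb x) 2
          _ = 1 := one_pow 2)
  have hintB2 : Integrable (fun x => B x^2) μ :=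
    HKaux.integrable_of_abs_le (hBm.pow measurable_const) 1
      (fun x => by
        rw [abs_of_nonneg (sq_nonneg _), ← sq_abs]
        calc |B x|^2 ≤ 1^2 := pow_le_pow_left₀ (abs_nonneg _) (hBb x) 2
          _ = 1 := one_pow 2)
  have hstep3 : ∫ x, |A x|^2 ∂μ ≤ (∫ x, B x^2 ∂μ) + (4*(H:ℝ)/(N:ℝ) + 4*(H:ℝ)^2/(N:ℝ)^2) := by
    have := integral_mono hintA2 (hintB2.add (integrable_const _)) hptsq
    simpa [integral_add hintB2 (integrable_const _)] using this
  have hintv2 : ∀ n, Integrable (fun x => v n x^2) μ := fun n =>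
    HKaux.integrable_of_abs_le ((hvm n).pow measurable_const) 1
      (fun x => by
        rw [abs_of_nonneg (sq_nonneg _), ← sq_abs]
        calc |v n x|^2 ≤ 1^2 := pow_le_pow_left₀ (abs_nonneg _) (hvb n x) 2
          _ = 1 := one_pow 2)
  have hstep4 : ∫ x, B x^2 ∂μ ≤ (1/(N:ℝ)) * ∑ n ∈ Finset.Icc 1 N, ∫ x, v n x^2 ∂μ := by
    have hpt : ∀ x, B x^2 ≤ (1/(N:ℝ)) * ∑ n ∈ Finset.Icc 1 N, v n x^2 := by
      intro x
      rw [hB]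
      have hcs : (∑ n ∈ Finset.Icc 1 N, v n x)^2
          ≤ (N:ℝ) * ∑ n ∈ Finset.Icc 1 N, v n x^2 := by
        have := sq_sum_le_card_mul_sum_sq (s := Finset.Icc 1 N) (f := fun n => v n x)
        simpa [Nat.card_Icc] using this
      calc ((1/(N:ℝ)) * ∑ n ∈ Finset.Icc 1 N, v n x)^2
          = (1/(N:ℝ))^2 * (∑ n ∈ Finset.Icc 1 N, v n x)^2 := by ring
        _ ≤ (1/(N:ℝ))^2 * ((N:ℝ) * ∑ n ∈ Finset.Icc 1 N, v n x^2) :=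
            mul_le_mul_of_nonneg_left hcs (by positivity)
        _ = (1/(N:ℝ)) * ∑ n ∈ Finset.Icc 1 N, v n x^2 := by field_simp
    have hintsum : Integrable (fun x => (1/(N:ℝ)) * ∑ n ∈ Finset.Icc 1 N, v n x^2) μ :=
      (integrable_finset_sum _ fun n _ => hintv2 n).const_mul _
    have := integral_mono hintB2 hintsum hpt
    calc ∫ x, B x^2 ∂μ ≤ ∫ x, (1/(N:ℝ)) * ∑ n ∈ Finset.Icc 1 N, v n x^2 ∂μ := this
      _ = (1/(N:ℝ)) * ∑ n ∈ Finset.Icc 1 N, ∫ x, v n x^2 ∂μ := by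
          rw [integral_const_mul, integral_finset_sum _ fun n _ => hintv2 n]
  have hstep5 : ∀ n, ∫ x, v n x^2 ∂μ = (1/(H:ℝ)^2) * ∑ p ∈ Finset.Icc 1 H ×ˢ Finset.Icc 1 H,
      ∫ x, u (n+p.1) x * u (n+p.2) x ∂μ := by
    intro n
    have hexp : ∀ x, v n x^2 = (1/(H:ℝ)^2) * ∑ p ∈ Finset.Icc 1 H ×ˢ Finset.Icc 1 H,
        u (n+p.1) x * u (n+p.2) x := by
      intro x
      rw [hv]
      simp only [Finset.sum_product]
      rw [sq]
      rw [show ((1/(H:ℝ)) * ∑ h ∈ Finset.Icc 1 H, u (n+h) x) *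
          ((1/(H:ℝ)) * ∑ h ∈ Finset.Icc 1 H, u (n+h) x)
          = (1/(H:ℝ)^2) * ((∑ h ∈ Finset.Icc 1 H, u (n+h) x) *
            (∑ h' ∈ Finset.Icc 1 H, u (n+h') x)) by ring]
      rw [Finset.sum_mul_sum]
    have hintuu : ∀ (p : ℕ × ℕ), Integrable (fun x => u (n+p.1) x * u (n+p.2) x) μ := by
      intro p
      refine HKaux.integrable_of_abs_le ((hum _).mul (hum _)) 1 fun x => ?_
      rw [abs_mul]
      exact mul_le_one₀ (hub _ _) (abs_nonneg _) (hub _ _)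
    calc ∫ x, v n x^2 ∂μ
        = ∫ x, (1/(H:ℝ)^2) * ∑ p ∈ Finset.Icc 1 H ×ˢ Finset.Icc 1 H,
            u (n+p.1) x * u (n+p.2) x ∂μ := integral_congr_ae (ae_of_all _ hexp)
      _ = (1/(H:ℝ)^2) * ∑ p ∈ Finset.Icc 1 H ×ˢ Finset.Icc 1 H,
            ∫ x, u (n+p.1) x * u (n+p.2) x ∂μ := by
          rw [integral_const_mul, integral_finset_sum _ fun p _ => hintuu p]
  calc ∫ x, |A x|^2 ∂μ
      ≤ (∫ x, B x^2 ∂μ) + (4*(H:ℝ)/(N:ℝ) + 4*(H:ℝ)^2/(N:ℝ)^2) := hstep3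
    _ ≤ ((1/(N:ℝ)) * ∑ n ∈ Finset.Icc 1 N, ∫ x, v n x^2 ∂μ)
        + (4*(H:ℝ)/(N:ℝ) + 4*(H:ℝ)^2/(N:ℝ)^2) := by linarith [hstep4]
    _ = ((1/(H:ℝ)^2) * ∑ p ∈ Finset.Icc 1 H ×ˢ Finset.Icc 1 H,
          ((1/(N:ℝ)) * ∑ n ∈ Finset.Icc 1 N, ∫ x, u (n+p.1) x * u (n+p.2) x ∂μ))
        + (4*(H:ℝ)/(N:ℝ) + 4*(H:ℝ)^2/(N:ℝ)^2) := by
        congr 1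
        rw [show (∑ n ∈ Finset.Icc 1 N, ∫ x, v n x^2 ∂μ)
            = ∑ n ∈ Finset.Icc 1 N, ((1/(H:ℝ)^2) * ∑ p ∈ Finset.Icc 1 H ×ˢ Finset.Icc 1 H,
                ∫ x, u (n+p.1) x * u (n+p.2) x ∂μ) from Finset.sum_congr rfl fun n _ => hstep5 n]
        exact HKaux.avg_swap _ _ _ _ _

end Ergodic

section Ergodic2

variable {X : Type} [MeasurableSpace X] {μ : Measure X} [IsProbabilityMeasure μ] {T : X → X}

set_option maxHeartbeats 1000000 in
lemma HKaux.key (hT : Ergodic T μ) {G₁ G₂ : X → ℝ}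
    (hG₁ : Measurable G₁) (hG₂ : Measurable G₂)
    (hb₁ : ∀ x, |G₁ x| ≤ 1) (hb₂ : ∀ x, |G₂ x| ≤ 1) (H : ℕ) (hH : 1 ≤ H) :
    limsup (fun N : ℕ =>
        ∫ x, |(1 / (N : ℝ)) * ∑ n ∈ Finset.Icc 1 N, G₁ (T^[n] x) * G₂ (T^[2 * n] x)| ^ 2 ∂μ) atTop
      ≤ 1/(H:ℝ) + 2 * Real.sqrt ((1/(H:ℝ)) * ∑ k ∈ Finset.Icc 1 H,
          |∫ x, G₁ x * G₁ (T^[k] x) ∂μ| ^ 2) := by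
  have hH' : (0:ℝ) < H := by exact_mod_cast hH
  set c : ℕ → ℝ := fun k => |∫ x, G₁ x * G₁ (T^[k] x) ∂μ| with hcdef
  have hc0 : ∀ k, 0 ≤ c k := fun k => abs_nonneg _
  have hc1 : ∀ k, c k ≤ 1 := fun k => HKaux.abs_integral_le_one
    (hG₁.mul (hG₁.comp (hT.measurable.iterate k)))
    (fun x => by
      simp only [abs_mul]
      exact mul_le_one₀ (hb₁ x) (abs_nonneg _) (hb₁ _))
  set P := Finset.Icc 1 H ×ˢ Finset.Icc 1 H with hP
  set r : ℕ × ℕ → ℕ → ℝ := fun p N => (1/(N:ℝ)) * ∑ n ∈ Finset.Icc 1 N,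
      ∫ x, (G₁ (T^[n+p.1] x) * G₂ (T^[2*(n+p.1)] x)) *
        (G₁ (T^[n+p.2] x) * G₂ (T^[2*(n+p.2)] x)) ∂μ with hr
  set L : ℕ × ℕ → ℝ := fun p => (∫ y, G₁ y * G₁ (T^[(p.1-p.2)+(p.2-p.1)] y) ∂μ) *
      ∫ y, G₂ y * G₂ (T^[2*((p.1-p.2)+(p.2-p.1))] y) ∂μ with hL
  have hrlim : ∀ p ∈ P, Tendsto (r p) atTop (𝓝 (L p)) := fun p _ =>
    HKaux.pair_limit hT hG₁ hG₂ hb₁ hb₂ p.1 p.2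
  have herr : Tendsto (fun N : ℕ => 4*(H:ℝ)/(N:ℝ) + 4*(H:ℝ)^2/(N:ℝ)^2) atTop (𝓝 0) := by
    have e1 : Tendsto (fun N : ℕ => 4*(H:ℝ)/(N:ℝ)) atTop (𝓝 0) :=
      Tendsto.div_atTop tendsto_const_nhds tendsto_natCast_atTop_atTop
    have e2 : Tendsto (fun N : ℕ => 4*(H:ℝ)^2/(N:ℝ)^2) atTop (𝓝 0) :=
      Tendsto.div_atTop tendsto_const_nhds
        ((tendsto_pow_atTop two_ne_zero).comp tendsto_natCast_atTop_atTop)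
    simpa using e1.add e2
  have hRlim : Tendsto (fun N : ℕ => (1/(H:ℝ)^2) * ∑ p ∈ P, r p N
      + (4*(H:ℝ)/(N:ℝ) + 4*(H:ℝ)^2/(N:ℝ)^2)) atTop (𝓝 ((1/(H:ℝ)^2) * ∑ p ∈ P, L p)) := by
    have := ((tendsto_finset_sum P hrlim).const_mul (1/(H:ℝ)^2)).add herr
    simpa using this
  have hev : ∀ᶠ N in atTop, (fun N : ℕ =>
      ∫ x, |(1 / (N : ℝ)) * ∑ n ∈ Finset.Icc 1 N, G₁ (T^[n] x) * G₂ (T^[2 * n] x)| ^ 2 ∂μ) N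
      ≤ (fun N : ℕ => (1/(H:ℝ)^2) * ∑ p ∈ P, r p N
        + (4*(H:ℝ)/(N:ℝ) + 4*(H:ℝ)^2/(N:ℝ)^2)) N := by
    filter_upwards [eventually_ge_atTop 1] with N hN
    exact HKaux.vdc_bound hT hG₁ hG₂ hb₁ hb₂ H N hH hN
  have h1 : limsup (fun N : ℕ =>
      ∫ x, |(1 / (N : ℝ)) * ∑ n ∈ Finset.Icc 1 N, G₁ (T^[n] x) * G₂ (T^[2 * n] x)| ^ 2 ∂μ) atTop
      ≤ (1/(H:ℝ)^2) * ∑ p ∈ P, L p := by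
    have hlow : IsBoundedUnder (· ≥ ·) atTop (fun N : ℕ =>
        ∫ x, |(1 / (N : ℝ)) * ∑ n ∈ Finset.Icc 1 N, G₁ (T^[n] x) * G₂ (T^[2 * n] x)| ^ 2 ∂μ) :=
      isBoundedUnder_of ⟨0, fun N => integral_nonneg (fun x => by positivity)⟩
    have hco := hlow.isCoboundedUnder_le
    have hbd : IsBoundedUnder (· ≤ ·) atTop (fun N : ℕ => (1/(H:ℝ)^2) * ∑ p ∈ P, r p N
        + (4*(H:ℝ)/(N:ℝ) + 4*(H:ℝ)^2/(N:ℝ)^2)) := hRlim.isBoundedUnder_le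
    calc limsup _ atTop ≤ limsup (fun N : ℕ => (1/(H:ℝ)^2) * ∑ p ∈ P, r p N
          + (4*(H:ℝ)/(N:ℝ) + 4*(H:ℝ)^2/(N:ℝ)^2)) atTop := limsup_le_limsup hev hco hbd
      _ = (1/(H:ℝ)^2) * ∑ p ∈ P, L p := hRlim.limsup_eq
  have hLle : ∀ p ∈ P, L p ≤ c ((p.1 - p.2) + (p.2 - p.1)) := by
    intro p _
    set k := (p.1 - p.2) + (p.2 - p.1)
    have hg2 : |∫ y, G₂ y * G₂ (T^[2*k] y) ∂μ| ≤ 1 :=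
      HKaux.abs_integral_le_one (hG₂.mul (hG₂.comp (hT.measurable.iterate (2*k))))
        (fun x => by
          simp only [abs_mul]
          exact mul_le_one₀ (hb₂ x) (abs_nonneg _) (hb₂ _))
    calc L p ≤ |L p| := le_abs_self _
      _ = c k * |∫ y, G₂ y * G₂ (T^[2*k] y) ∂μ| := abs_mul _ _
      _ ≤ c k * 1 := mul_le_mul_of_nonneg_left hg2 (hc0 k)
      _ = c k := mul_one _
  have hsum : ∑ p ∈ P, L p ≤ (H:ℝ) * (1 + 2 * ∑ k ∈ Finset.Icc 1 H, c k) :=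
    le_trans (Finset.sum_le_sum hLle) (HKaux.count_bound c hc0 hc1 H)
  have hsum2nonneg : (0:ℝ) ≤ ∑ k ∈ Finset.Icc 1 H, c k ^ 2 :=
    Finset.sum_nonneg fun k _ => sq_nonneg _
  have hCS : ∑ k ∈ Finset.Icc 1 H, c k
      ≤ Real.sqrt ((H:ℝ) * ∑ k ∈ Finset.Icc 1 H, c k ^ 2) := by
    have hsq : (∑ k ∈ Finset.Icc 1 H, c k)^2 ≤ (H:ℝ) * ∑ k ∈ Finset.Icc 1 H, c k ^ 2 := by
      simpa [Nat.card_Icc] using sq_sum_le_card_mul_sum_sq (s := Finset.Icc 1 H) (f := c)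
    have h2 : (0:ℝ) ≤ ∑ k ∈ Finset.Icc 1 H, c k := Finset.sum_nonneg fun k _ => hc0 k
    calc ∑ k ∈ Finset.Icc 1 H, c k = Real.sqrt ((∑ k ∈ Finset.Icc 1 H, c k)^2) :=
          (Real.sqrt_sq h2).symm
      _ ≤ Real.sqrt ((H:ℝ) * ∑ k ∈ Finset.Icc 1 H, c k ^ 2) := Real.sqrt_le_sqrt hsq
  have hdiv : Real.sqrt ((H:ℝ) * ∑ k ∈ Finset.Icc 1 H, c k ^ 2) / (H:ℝ)
      = Real.sqrt ((1/(H:ℝ)) * ∑ k ∈ Finset.Icc 1 H, c k ^ 2) := by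
    rw [show (1/(H:ℝ)) * ∑ k ∈ Finset.Icc 1 H, c k ^ 2
        = ((H:ℝ) * ∑ k ∈ Finset.Icc 1 H, c k ^ 2)/(H:ℝ)^2 by field_simp]
    rw [Real.sqrt_div (mul_nonneg (le_of_lt hH') hsum2nonneg), Real.sqrt_sq (le_of_lt hH')]
  calc limsup (fun N : ℕ =>
      ∫ x, |(1 / (N : ℝ)) * ∑ n ∈ Finset.Icc 1 N, G₁ (T^[n] x) * G₂ (T^[2 * n] x)| ^ 2 ∂μ) atTop
      ≤ (1/(H:ℝ)^2) * ∑ p ∈ P, L p := h1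
    _ ≤ (1/(H:ℝ)^2) * ((H:ℝ) * (1 + 2 * ∑ k ∈ Finset.Icc 1 H, c k)) :=
        mul_le_mul_of_nonneg_left hsum (by positivity)
    _ = 1/(H:ℝ) + (2/(H:ℝ)) * ∑ k ∈ Finset.Icc 1 H, c k := by field_simp
    _ ≤ 1/(H:ℝ) + (2/(H:ℝ)) * Real.sqrt ((H:ℝ) * ∑ k ∈ Finset.Icc 1 H, c k ^ 2) := by
        have := mul_le_mul_of_nonneg_left hCS (by positivity : (0:ℝ) ≤ 2/(H:ℝ))
        linarith
    _ = 1/(H:ℝ) + 2 * Real.sqrt ((1/(H:ℝ)) * ∑ k ∈ Finset.Icc 1 H, c k ^ 2) := by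
        rw [← hdiv]; ring

end Ergodic2

/-- there is an absolute constant `C > 0` such that for every ergodic system and
all `G₁, G₂` bounded by 1,
`limsup_N ∫ |(1/N) ∑_{n=1}^N G₁(Tⁿx) G₂(T²ⁿx)|² dμ ≤ C ⦀G₁⦀₂²`
(here `⦀G₁⦀₂² = (⦀G₁⦀₂⁴)^{1/2}`). -/
theorem limsup_integral_sq_avg_le_seminorm2 :
    ∃ C : ℝ, 0 < C ∧
      ∀ {X : Type} [MeasurableSpace X] (μ : Measure X), ∀ [IsProbabilityMeasure μ],
      ∀ (T : X → X), Ergodic T μ →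
      ∀ (G₁ G₂ : X → ℝ), Measurable G₁ → Measurable G₂ →
        (∀ x, |G₁ x| ≤ 1) → (∀ x, |G₂ x| ≤ 1) →
        limsup (fun N : ℕ =>
          ∫ x, |(1 / (N : ℝ)) * ∑ n ∈ Finset.Icc 1 N, G₁ (T^[n] x) * G₂ (T^[2 * n] x)| ^ 2 ∂μ)
            atTop
          ≤ C * Real.sqrt (hkSeminorm2pow4 μ T G₁) := by
  refine ⟨2, by norm_num, ?_⟩
  intro X _ μ _ T hT G₁ G₂ hG₁ hG₂ hb₁ hb₂
  set s : ℕ → ℝ := fun H => (1 / (H : ℝ)) * ∑ h ∈ Finset.Icc 1 H,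
    |∫ x, G₁ x * G₁ (T^[h] x) ∂μ| ^ 2 with hsdef
  set S : ℝ := hkSeminorm2pow4 μ T G₁ with hSdef
  have hS : S = limsup s atTop := rfl
  set LHS : ℝ := limsup (fun N : ℕ =>
    ∫ x, |(1 / (N : ℝ)) * ∑ n ∈ Finset.Icc 1 N, G₁ (T^[n] x) * G₂ (T^[2 * n] x)| ^ 2 ∂μ) atTop
    with hLHS
  have hc1 : ∀ k, |∫ x, G₁ x * G₁ (T^[k] x) ∂μ| ≤ 1 := fun k => HKaux.abs_integral_le_one
    (hG₁.mul (hG₁.comp (hT.measurable.iterate k)))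
    (fun x => by
      simp only [abs_mul]
      exact mul_le_one₀ (hb₁ x) (abs_nonneg _) (hb₁ _))
  have hsb : ∀ H, s H ≤ 1 := by
    intro H
    have := HKaux.avg_abs_le H (fun k => |∫ x, G₁ x * G₁ (T^[k] x) ∂μ| ^ 2)
      (fun k => by
        rw [abs_of_nonneg (sq_nonneg _)]
        calc |∫ x, G₁ x * G₁ (T^[k] x) ∂μ| ^ 2 ≤ 1^2 :=
              pow_le_pow_left₀ (abs_nonneg _) (hc1 k) 2
          _ = 1 := one_pow 2)
    exact (abs_le.mp this).2
  have hbdd : IsBoundedUnder (· ≤ ·) atTop s := isBoundedUnder_of ⟨1, fun H => hsb H⟩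
  have hkey : ∀ H : ℕ, 1 ≤ H → LHS ≤ 1/(H:ℝ) + 2 * Real.sqrt (s H) := fun H hH =>
    HKaux.key hT hG₁ hG₂ hb₁ hb₂ H hH
  have main : ∀ ε : ℝ, 0 < ε → LHS ≤ ε + 2 * Real.sqrt (S + ε) := by
    intro ε hε
    have hev : ∀ᶠ H in atTop, s H < S + ε := by
      refine eventually_lt_of_limsup_lt ?_ hbdd
      rw [← hS]
      linarith
    obtain ⟨H, hH1, hH2⟩ := (hev.and (eventually_ge_atTop (max 1 ⌈1/ε⌉₊))).exists
    have hH1' : 1 ≤ H := le_trans (le_max_left _ _) hH2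
    have hHε : 1/(H:ℝ) ≤ ε := by
      have h1 : (1/ε : ℝ) ≤ (H:ℝ) := by
        calc (1/ε : ℝ) ≤ (⌈1/ε⌉₊ : ℝ) := Nat.le_ceil _
          _ ≤ (H:ℝ) := by exact_mod_cast le_trans (le_max_right _ _) hH2
      have hHpos : (0:ℝ) < H := by
        have : (0:ℕ) < H := hH1'
        exact_mod_cast this
      rw [div_le_iff₀ hHpos]
      calc (1:ℝ) = ε * (1/ε) := by field_simp
        _ ≤ ε * (H:ℝ) := mul_le_mul_of_nonneg_left h1 (le_of_lt hε)
    calc LHS ≤ 1/(H:ℝ) + 2 * Real.sqrt (s H) := hkey H hH1'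
      _ ≤ ε + 2 * Real.sqrt (S + ε) := by
          have := Real.sqrt_le_sqrt (le_of_lt hH1)
          linarith
  have h0 : Tendsto (fun n : ℕ => (1:ℝ)/((n:ℝ)+1)) atTop (𝓝 0) :=
    tendsto_one_div_add_atTop_nhds_zero_nat
  have h1 : Tendsto (fun n : ℕ => S + 1/((n:ℝ)+1)) atTop (𝓝 S) := by
    have := tendsto_const_nhds (x := S) (f := atTop (α := ℕ))
    simpa using this.add h0
  have h2 : Tendsto (fun n : ℕ => Real.sqrt (S + 1/((n:ℝ)+1))) atTop (𝓝 (Real.sqrt S)) :=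
    (Real.continuous_sqrt.tendsto S).comp h1
  have h3 : Tendsto (fun n : ℕ => 1/((n:ℝ)+1) + 2 * Real.sqrt (S + 1/((n:ℝ)+1))) atTop
      (𝓝 (2 * Real.sqrt S)) := by
    have := h0.add (h2.const_mul 2)
    simpa using this
  exact ge_of_tendsto' h3 fun n => main (1/((n:ℝ)+1)) (by positivity)
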